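/- Let G be a finite p-group with a unique A₂-subgroup K and |G'| ≥ p². Then K is not contained in Φ(G) if and only if G has a minimal non-abelian subgroup of index p. -/

import Mathlib

/-- `G` is a minimal non-abelian group: non-abelian, but all proper subgroups abelian. -/
def IsMinimalNonabelian (G : Type*) [Group G] : Prop :=
  (¬ ∀ a b : G, a * b = b * a) ∧
    ∀ H : Subgroup G, H ≠ ⊤ → ∀ a ∈ H, ∀ b ∈ H, a * b = b * a

/-- `G` is an `𝒜_t`-group: it has a non-abelian subgroup of index `p ^ (t-1)`,
but all subgroups of index `p ^ t` are abelian. -/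
def IsAGroup (p t : ℕ) (G : Type*) [Group G] : Prop :=
  (∃ H : Subgroup G, H.index = p ^ (t - 1) ∧ ¬ ∀ a ∈ H, ∀ b ∈ H, a * b = b * a) ∧
    ∀ H : Subgroup G, H.index = p ^ t → ∀ a ∈ H, ∀ b ∈ H, a * b = b * a

open Subgroup
open scoped Pointwise
open scoped commutatorElement

theorem not_sq_le {p : ℕ} (hp2 : 2 ≤ p) : ¬ (p * p ≤ p) := by nlinarith

theorem not_sq_le_one {p : ℕ} (hp2 : 2 ≤ p) : ¬ (p * p ≤ 1) := by nlinarith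

section Aux

variable {p : ℕ} {G : Type*} [Group G] [Finite G]

theorem pg_coatom_normal (hp : p.Prime) (hG : IsPGroup p G) {M : Subgroup G}
    (hM : IsCoatom M) : M.Normal := by
  haveI : Fact p.Prime := ⟨hp⟩
  haveI := hG.isNilpotent
  exact Subgroup.NormalizerCondition.normal_of_coatom M normalizerCondition_of_isNilpotent hM

theorem pg_coatom_index (hp : p.Prime) (hG : IsPGroup p G) {M : Subgroup G}
    (hM : IsCoatom M) : M.index = p := by
  haveI : Fact p.Prime := ⟨hp⟩
  haveI := pg_coatom_normal hp hG hM
  set π := QuotientGroup.mk' M with hπ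
  have hsurj : Function.Surjective π := QuotientGroup.mk'_surjective M
  have hgen : ∀ x : G ⧸ M, x ≠ 1 → Subgroup.zpowers x = ⊤ := by
    intro x hx
    obtain ⟨g, hg⟩ := hsurj x
    have hMH : M ≤ Subgroup.comap π (Subgroup.zpowers x) := by
      intro m hm
      have : π m = 1 := (QuotientGroup.eq_one_iff m).mpr hm
      rw [Subgroup.mem_comap, this]
      exact one_mem _
    have hgH : g ∈ Subgroup.comap π (Subgroup.zpowers x) := by
      simp [Subgroup.mem_comap, hg, Subgroup.mem_zpowers]
    have hgM : g ∉ M := by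
      intro hgm
      exact hx (hg ▸ (QuotientGroup.eq_one_iff g).mpr hgm)
    have hlt : M < Subgroup.comap π (Subgroup.zpowers x) :=
      lt_of_le_of_ne hMH (fun h => hgM (h ▸ hgH))
    have htop := hM.2 _ hlt
    have := congrArg (Subgroup.map π) htop
    rwa [Subgroup.map_comap_eq_self_of_surjective hsurj,
      Subgroup.map_top_of_surjective π hsurj] at this
  -- get a nontrivial element
  have hne : M.index ≠ 1 := fun h => hM.1 (Subgroup.index_eq_one.mp h)
  have hpos : 0 < Nat.card (G ⧸ M) := Nat.card_pos
  have hnontriv : 1 < Nat.card (G ⧸ M) := by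
    rcases Nat.lt_or_ge 1 (Nat.card (G ⧸ M)) with h | h
    · exact h
    · exact absurd (by omega : Nat.card (G ⧸ M) = 1) (by rwa [Subgroup.index_eq_card] at hne)
  haveI : Nontrivial (G ⧸ M) := Finite.one_lt_card_iff_nontrivial.mp hnontriv
  obtain ⟨x, hx⟩ := exists_ne (1 : G ⧸ M)
  have hxt := hgen x hx
  have hcard : Nat.card (G ⧸ M) = orderOf x := by
    rw [← Nat.card_zpowers, hxt, Subgroup.card_top]
  -- orderOf x is a power of p
  have hQ : IsPGroup p (G ⧸ M) := hG.to_quotient M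
  obtain ⟨k, hk⟩ := hQ x
  obtain ⟨j, hjle, hj⟩ := (Nat.dvd_prime_pow hp).mp (orderOf_dvd_of_pow_eq_one hk)
  have hj1 : j = 1 := by
    rcases j with _ | j
    · exfalso
      rw [pow_zero] at hj
      exact hx (orderOf_eq_one_iff.mp hj)
    rcases j with _ | j
    · rfl
    · exfalso
      -- x ^ p is nontrivial, so generates everything, but has smaller order
      have hxp : x ^ p ≠ 1 := by
        intro h
        have h1 : p ^ (j + 1 + 1) ∣ p := hj ▸ orderOf_dvd_of_pow_eq_one h
        have h2 : p ^ (j + 1 + 1) ≤ p := Nat.le_of_dvd hp.pos h1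
        have h3 : p ^ 1 < p ^ (j + 1 + 1) := Nat.pow_lt_pow_right hp.one_lt (by omega)
        rw [pow_one] at h3
        omega
      have hxpt := hgen _ hxp
      have hord : orderOf (x ^ p) = Nat.card (G ⧸ M) := by
        rw [← Nat.card_zpowers, hxpt, Subgroup.card_top]
      have hdvd : orderOf (x ^ p) ∣ p ^ (j + 1) := by
        apply orderOf_dvd_of_pow_eq_one
        rw [← pow_mul, ← pow_succ', ← hj]
        exact pow_orderOf_eq_one x
      rw [hord, hcard, hj] at hdvd
      have hle2 := Nat.le_of_dvd (Nat.pow_pos hp.pos) hdvd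
      have h3 : p ^ (j + 1) < p ^ (j + 1 + 1) := Nat.pow_lt_pow_right hp.one_lt (by omega)
      omega
  rw [Subgroup.index_eq_card, hcard, hj, hj1, pow_one]

theorem coatom_of_index_p (hp : p.Prime) {M : Subgroup G} (h : M.index = p) :
    IsCoatom M := by
  constructor
  · intro htop
    rw [htop, Subgroup.index_top] at h
    exact absurd h.symm hp.one_lt.ne'
  · intro H hMH
    have hle : M ≤ H := hMH.le
    have hdvd : H.index ∣ p := h ▸ Subgroup.index_dvd_of_le hle
    rcases (Nat.Prime.eq_one_or_self_of_dvd hp _ hdvd) with h1 | hpe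
    · exact Subgroup.index_eq_one.mp h1
    · exfalso
      have h2 : M.relIndex H * H.index = p := by rw [Subgroup.relIndex_mul_index hle, h]
      rw [hpe] at h2
      have : M.relIndex H = 1 :=
        Nat.eq_of_mul_eq_mul_right hp.pos (by rw [h2, one_mul])
      exact absurd (Subgroup.relIndex_eq_one.mp this) hMH.not_ge


theorem pg_commutator_mem_coatom (hp : p.Prime) (hG : IsPGroup p G) {M : Subgroup G}
    (hM : IsCoatom M) (g h : G) : ⁅g, h⁆ ∈ M := by
  haveI : Fact p.Prime := ⟨hp⟩
  haveI := pg_coatom_normal hp hG hM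
  have hc : Nat.card (G ⧸ M) = p := by
    rw [← Subgroup.index_eq_card, pg_coatom_index hp hG hM]
  haveI : IsCyclic (G ⧸ M) := isCyclic_of_prime_card hc
  letI : CommGroup (G ⧸ M) := IsCyclic.commGroup
  have : (QuotientGroup.mk' M) ⁅g, h⁆ = 1 := by
    rw [map_commutatorElement]
    exact commutatorElement_eq_one_iff_commute.mpr (mul_comm _ _)
  exact (QuotientGroup.eq_one_iff _).mp this

theorem pg_pow_mem_coatom (hp : p.Prime) (hG : IsPGroup p G) {M : Subgroup G}
    (hM : IsCoatom M) (g : G) : g ^ p ∈ M := by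
  haveI := pg_coatom_normal hp hG hM
  have hc : Nat.card (G ⧸ M) = p := by
    rw [← Subgroup.index_eq_card, pg_coatom_index hp hG hM]
  have : (QuotientGroup.mk' M) (g ^ p) = 1 := by
    rw [map_pow, ← hc]
    exact pow_card_eq_one'
  exact (QuotientGroup.eq_one_iff _).mp this

theorem le_frattini_iff {H : Subgroup G} :
    H ≤ frattini G ↔ ∀ M : Subgroup G, IsCoatom M → H ≤ M := by
  rw [frattini, Order.radical]
  exact le_iInf₂_iff

theorem mem_frattini_of_coatoms {x : G} (h : ∀ M : Subgroup G, IsCoatom M → x ∈ M) :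
    x ∈ frattini G := by
  have : Subgroup.zpowers x ≤ frattini G :=
    le_frattini_iff.mpr fun M hM => by
      rintro y hy
      obtain ⟨k, rfl⟩ := Subgroup.mem_zpowers_iff.mp hy
      exact Subgroup.zpow_mem M (h M hM) k
  exact this (Subgroup.mem_zpowers x)

theorem pg_commutator_mem_frattini (hp : p.Prime) (hG : IsPGroup p G) (g h : G) :
    ⁅g, h⁆ ∈ frattini G :=
  mem_frattini_of_coatoms fun M hM => pg_commutator_mem_coatom hp hG hM g h

theorem pg_pow_mem_frattini (hp : p.Prime) (hG : IsPGroup p G) (g : G) :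
    g ^ p ∈ frattini G :=
  mem_frattini_of_coatoms fun M hM => pg_pow_mem_coatom hp hG hM g

theorem normal_of_commutator_mem {H : Subgroup G} (h : ∀ g k : G, ⁅g, k⁆ ∈ H) :
    H.Normal := by
  constructor
  intro n hn g
  have he : g * n * g⁻¹ = ⁅g, n⁆ * n := by
    rw [commutatorElement_def]; group
  rw [he]
  exact H.mul_mem (h g n) hn

theorem IsAGroup.of_mulEquiv {t : ℕ} {G₁ G₂ : Type*} [Group G₁] [Group G₂]
    (e : G₁ ≃* G₂) (h : IsAGroup p t G₁) : IsAGroup p t G₂ := by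
  obtain ⟨⟨H, hHi, hHn⟩, hab⟩ := h
  have hrange : (e.toMonoidHom).range = ⊤ := by
    ext x; simp [MonoidHom.mem_range, e.surjective x]
  constructor
  · refine ⟨H.map e.toMonoidHom, ?_, ?_⟩
    · rw [Subgroup.index_map_of_injective _ e.injective, hrange, Subgroup.index_top, mul_one, hHi]
    · intro hcomm
      apply hHn
      intro a ha b hb
      have := hcomm (e a) ⟨a, ha, rfl⟩ (e b) ⟨b, hb, rfl⟩
      apply e.injective
      rw [map_mul, map_mul]
      exact this
  · intro L hLi a ha b hb
    have hLi' : (L.comap e.toMonoidHom).index = p ^ t := by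
      rw [Subgroup.index_comap_of_surjective _ e.surjective, hLi]
    have h1 : e.symm a ∈ L.comap e.toMonoidHom := by
      simp [Subgroup.mem_comap, e.apply_symm_apply, ha]
    have h2 : e.symm b ∈ L.comap e.toMonoidHom := by
      simp [Subgroup.mem_comap, e.apply_symm_apply, hb]
    have := hab _ hLi' _ h1 _ h2
    have := congrArg e this
    rwa [map_mul, map_mul, e.apply_symm_apply, e.apply_symm_apply] at this


theorem noA2_struct {p : ℕ} (hp : p.Prime) :
    ∀ (n : ℕ) (P : Type u) (_ : Group P) (_ : Finite P), Nat.card P ≤ n → IsPGroup p P →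
      (¬ ∃ L : Subgroup P, IsAGroup p 2 ↥L) →
      (∀ a b : P, a * b = b * a) ∨ IsMinimalNonabelian P := by
  intro n
  induction n with
  | zero =>
    intro P _ _ hc _ _
    exact absurd hc (by have := Nat.card_pos (α := P); omega)
  | succ n ih =>
    intro P _ _ hc hPG hno
    by_contra hcon
    push_neg at hcon
    obtain ⟨hnab, hnmin⟩ := hcon
    rw [IsMinimalNonabelian] at hnmin
    push_neg at hnmin
    obtain ⟨H0, hH0t, a0, ha0, b0, hb0, hab0⟩ := hnmin hnab
    -- every proper elementwise-nonabelian subgroup is minimal nonabelian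
    have key : ∀ H : Subgroup P, H ≠ ⊤ → (¬ ∀ a ∈ H, ∀ b ∈ H, a * b = b * a) →
        IsMinimalNonabelian ↥H := by
      intro H hHt hHnab
      have hcard : Nat.card ↥H ≤ n := by
        have h1 : Nat.card ↥H ≤ Nat.card P := Subgroup.card_le_card_group H
        have h2 : Nat.card ↥H ≠ Nat.card P := fun he => hHt (Subgroup.eq_top_of_card_eq H he)
        omega
      have hHno : ¬ ∃ L : Subgroup ↥H, IsAGroup p 2 ↥L := by
        rintro ⟨L, hL⟩
        exact hno ⟨L.map H.subtype,
          IsAGroup.of_mulEquiv (Subgroup.equivMapOfInjective L H.subtype H.subtype_injective) hL⟩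
      rcases ih ↥H inferInstance inferInstance hcard (hPG.to_subgroup H) hHno with hab | hmin
      · exact absurd (fun a ha b hb => Subtype.ext_iff.mp (hab ⟨a, ha⟩ ⟨b, hb⟩)) hHnab
      · exact hmin
    -- P is an A₂-group, contradiction
    apply hno
    refine ⟨⊤, IsAGroup.of_mulEquiv Subgroup.topEquiv.symm ?_⟩
    constructor
    · -- a nonabelian subgroup of index p
      rcases eq_top_or_exists_le_coatom H0 with rfl | ⟨N, hNc, hle⟩
      · exact absurd rfl hH0t
      · refine ⟨N, ?_, ?_⟩
        · rw [pg_coatom_index hp hPG hNc]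
          norm_num
        · intro hcomm
          exact hab0 (hcomm a0 (hle ha0) b0 (hle hb0))
    · -- subgroups of index p² are abelian
      intro L hLi a ha b hb
      have hLt : L ≠ ⊤ := by
        intro h
        rw [h, Subgroup.index_top] at hLi
        have := hp.two_le
        nlinarith [hLi.symm]
      rcases eq_top_or_exists_le_coatom L with h | ⟨N, hNc, hle⟩
      · exact absurd h hLt
      have hNi : N.index = p := pg_coatom_index hp hPG hNc
      have hrel : L.relIndex N = p := by
        have h2 : L.relIndex N * N.index = p ^ 2 := by
          rw [Subgroup.relIndex_mul_index hle, hLi]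
        rw [hNi, pow_two] at h2
        exact Nat.eq_of_mul_eq_mul_right hp.pos h2
      by_cases hNab : ∀ a ∈ N, ∀ b ∈ N, a * b = b * a
      · exact hNab a (hle ha) b (hle hb)
      · have hmin := key N hNc.1 hNab
        have hLN : L.subgroupOf N ≠ ⊤ := by
          intro h
          have : (L.subgroupOf N).index = 1 := by rw [h, Subgroup.index_top]
          rw [show (L.subgroupOf N).index = L.relIndex N from rfl, hrel] at this
          exact hp.one_lt.ne' this
        have := hmin.2 (L.subgroupOf N) hLN ⟨a, hle ha⟩ (Subgroup.mem_subgroupOf.mpr ha)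
          ⟨b, hle hb⟩ (Subgroup.mem_subgroupOf.mpr hb)
        exact Subtype.ext_iff.mp this


theorem card_commutator_le_of_two_abelian (hp : p.Prime) (hG : IsPGroup p G)
    {N₁ N₂ : Subgroup G} (h1 : IsCoatom N₁) (h2 : IsCoatom N₂) (hne : N₁ ≠ N₂)
    (hab1 : ∀ a ∈ N₁, ∀ b ∈ N₁, a * b = b * a)
    (hab2 : ∀ a ∈ N₂, ∀ b ∈ N₂, a * b = b * a) :
    Nat.card (commutator G) ≤ p := by
  haveI hn1 : N₁.Normal := pg_coatom_normal hp hG h1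
  haveI hn2 : N₂.Normal := pg_coatom_normal hp hG h2
  have hnle : ¬ N₂ ≤ N₁ := by
    intro hle
    rcases lt_or_eq_of_le hle with hlt | heq
    · exact h1.1 (h2.2 _ hlt)
    · exact hne heq.symm
  obtain ⟨c, hc2, hc1⟩ := SetLike.not_le_iff_exists.mp hnle
  have htop : N₁ ⊔ N₂ = ⊤ := by
    apply h1.2
    refine lt_of_le_of_ne le_sup_left fun he => hnle ?_
    rw [he]; exact le_sup_right
  have hW0c : ∀ x ∈ N₁ ⊓ N₂, ∀ g : G, x * g = g * x := by
    intro x hx g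
    have hcen : (⊤ : Subgroup G) ≤ Subgroup.centralizer {x} := by
      rw [← htop]
      apply sup_le
      · intro y hy
        exact Subgroup.mem_centralizer_iff.mpr fun s hs => by
          rw [Set.mem_singleton_iff] at hs; rw [hs]
          exact hab1 x hx.1 y hy
      · intro y hy
        exact Subgroup.mem_centralizer_iff.mpr fun s hs => by
          rw [Set.mem_singleton_iff] at hs; rw [hs]
          exact hab2 x hx.2 y hy
    exact (Subgroup.mem_centralizer_iff.mp (hcen (Subgroup.mem_top g))) x rfl
  have hcomm_mem : ∀ a : G, a ∈ N₁ → ⁅a, c⁆ ∈ N₁ ⊓ N₂ := by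
    intro a ha
    constructor
    · have h3 : c * a⁻¹ * c⁻¹ ∈ N₁ := hn1.conj_mem _ (N₁.inv_mem ha) c
      have he : ⁅a, c⁆ = a * (c * a⁻¹ * c⁻¹) := by rw [commutatorElement_def]; group
      rw [he]; exact N₁.mul_mem ha h3
    · have h3 : a * c * a⁻¹ ∈ N₂ := hn2.conj_mem _ hc2 a
      have he : ⁅a, c⁆ = (a * c * a⁻¹) * c⁻¹ := by rw [commutatorElement_def]
      rw [he]; exact N₂.mul_mem h3 (N₂.inv_mem hc2)
  have hhom : ∀ a b : G, a ∈ N₁ → b ∈ N₁ → ⁅a * b, c⁆ = ⁅a, c⁆ * ⁅b, c⁆ := by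
    intro a b ha hb
    have hbc := hW0c _ (hcomm_mem b hb)
    have h1' : b * c * b⁻¹ = ⁅b, c⁆ * c := by rw [commutatorElement_def]; group
    have step : a * b * c * (a * b)⁻¹ * c⁻¹ = a * (b * c * b⁻¹) * a⁻¹ * c⁻¹ := by group
    rw [commutatorElement_def, commutatorElement_def, commutatorElement_def, step, h1']
    calc a * (⁅b, c⁆ * c) * a⁻¹ * c⁻¹ = (a * ⁅b, c⁆) * (c * a⁻¹ * c⁻¹) := by group
    _ = (⁅b, c⁆ * a) * (c * a⁻¹ * c⁻¹) := by rw [← hbc a]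
    _ = ⁅b, c⁆ * (a * c * a⁻¹ * c⁻¹) := by group
    _ = (a * c * a⁻¹ * c⁻¹) * ⁅b, c⁆ := hbc (a * c * a⁻¹ * c⁻¹)
    _ = a * c * a⁻¹ * c⁻¹ * (⁅b, c⁆ * c * c⁻¹) := by group
  let f : ↥N₁ →* G := MonoidHom.mk' (fun a => ⁅(a : G), c⁆)
    (fun a b => hhom (a : G) (b : G) a.2 b.2)
  have hWmem : ∀ x ∈ f.range, x ∈ N₁ ⊓ N₂ := by
    rintro x ⟨a, rfl⟩
    exact hcomm_mem (a : G) a.2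
  have hWcen : ∀ x ∈ f.range, ∀ g : G, x * g = g * x := fun x hx => hW0c x (hWmem x hx)
  haveI hWn : (f.range).Normal := by
    constructor
    intro x hx g
    have he : g * x * g⁻¹ = x := by rw [← hWcen x hx g]; group
    rwa [he]
  have hker : (N₁ ⊓ N₂).subgroupOf N₁ ≤ f.ker := by
    intro a ha
    rw [Subgroup.mem_subgroupOf] at ha
    rw [MonoidHom.mem_ker]
    show ⁅(a : G), c⁆ = 1
    exact commutatorElement_eq_one_iff_commute.mpr (hab2 (a : G) ha.2 c hc2)
  have hcardW : Nat.card f.range ∣ p := by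
    rw [← Subgroup.index_ker]
    have hd1 : f.ker.index ∣ ((N₁ ⊓ N₂).subgroupOf N₁).index := Subgroup.index_dvd_of_le hker
    have he2 : ((N₁ ⊓ N₂).subgroupOf N₁).index = N₂.relIndex N₁ := by
      show (N₁ ⊓ N₂).relIndex N₁ = N₂.relIndex N₁
      rw [inf_comm, Subgroup.inf_relIndex_right]
    have hd2 : N₂.relIndex N₁ ∣ N₂.index := Subgroup.relIndex_dvd_index_of_normal N₂ N₁
    rw [he2] at hd1
    rw [pg_coatom_index hp hG h2] at hd2
    exact hd1.trans hd2
  set W := f.range with hW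
  set π := QuotientGroup.mk' W with hπ
  have hπsurj : Function.Surjective π := QuotientGroup.mk'_surjective W
  have htop2 : N₁ ⊔ Subgroup.zpowers c = ⊤ := by
    apply h1.2
    refine lt_of_le_of_ne le_sup_left fun he => hc1 ?_
    rw [he]; exact Subgroup.mem_sup_right (Subgroup.mem_zpowers c)
  have hQtop : Subgroup.map π N₁ ⊔ Subgroup.zpowers (π c) = ⊤ := by
    rw [← MonoidHom.map_zpowers, ← Subgroup.map_sup, htop2,
      Subgroup.map_top_of_surjective π hπsurj]
  have hNcomm : ∀ a : G, a ∈ N₁ → π a * π c = π c * π a := by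
    intro a ha
    have he : ⁅π a, π c⁆ = 1 := by
      rw [← map_commutatorElement]
      exact (QuotientGroup.eq_one_iff _).mpr ⟨⟨a, ha⟩, rfl⟩
    exact commutatorElement_eq_one_iff_commute.mp he
  have step1 : ∀ x : G ⧸ W, Commute (π c) x := by
    intro x
    have hcen : (⊤ : Subgroup (G ⧸ W)) ≤ Subgroup.centralizer {π c} := by
      rw [← hQtop]
      apply sup_le
      · rintro y ⟨a, ha, rfl⟩
        exact Subgroup.mem_centralizer_iff.mpr fun s hs => by
          rw [Set.mem_singleton_iff] at hs; rw [hs]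
          exact (hNcomm a ha).symm
      · intro y hy
        obtain ⟨k, rfl⟩ := Subgroup.mem_zpowers_iff.mp hy
        exact Subgroup.mem_centralizer_iff.mpr fun s hs => by
          rw [Set.mem_singleton_iff] at hs; rw [hs]
          exact ((Commute.refl (π c)).zpow_right k).eq
    exact (Subgroup.mem_centralizer_iff.mp (hcen (Subgroup.mem_top x))) (π c) rfl
  have step2 : ∀ a : G, a ∈ N₁ → ∀ x : G ⧸ W, Commute (π a) x := by
    intro a ha x
    have hcen : (⊤ : Subgroup (G ⧸ W)) ≤ Subgroup.centralizer {π a} := by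
      rw [← hQtop]
      apply sup_le
      · rintro z ⟨b, hb, rfl⟩
        exact Subgroup.mem_centralizer_iff.mpr fun s hs => by
          rw [Set.mem_singleton_iff] at hs; rw [hs]
          rw [← map_mul, ← map_mul, hab1 a ha b hb]
      · intro z hz
        obtain ⟨k, rfl⟩ := Subgroup.mem_zpowers_iff.mp hz
        exact Subgroup.mem_centralizer_iff.mpr fun s hs => by
          rw [Set.mem_singleton_iff] at hs; rw [hs]
          exact (((step1 (π a)).symm).zpow_right k).eq
    exact (Subgroup.mem_centralizer_iff.mp (hcen (Subgroup.mem_top x))) (π a) rfl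
  have habQ : ∀ x y : G ⧸ W, x * y = y * x := by
    intro x y
    have hcen : (⊤ : Subgroup (G ⧸ W)) ≤ Subgroup.centralizer {y} := by
      rw [← hQtop]
      apply sup_le
      · rintro z ⟨a, ha, rfl⟩
        exact Subgroup.mem_centralizer_iff.mpr fun s hs => by
          rw [Set.mem_singleton_iff] at hs; rw [hs]
          exact (step2 a ha y).eq.symm
      · intro z hz
        obtain ⟨k, rfl⟩ := Subgroup.mem_zpowers_iff.mp hz
        exact Subgroup.mem_centralizer_iff.mpr fun s hs => by
          rw [Set.mem_singleton_iff] at hs; rw [hs]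
          exact (((step1 y).zpow_left k).symm).eq
    exact ((Subgroup.mem_centralizer_iff.mp (hcen (Subgroup.mem_top x))) y rfl).symm
  have hcle : commutator G ≤ W := by
    rw [_root_.commutator_def, Subgroup.commutator_le]
    intro g _ h _
    have he : π ⁅g, h⁆ = 1 := by
      rw [map_commutatorElement]
      exact commutatorElement_eq_one_iff_commute.mpr (habQ _ _)
    exact (QuotientGroup.eq_one_iff _).mp he
  calc Nat.card (commutator G) ≤ Nat.card W := Subgroup.card_le_of_le hcle
  _ ≤ p := Nat.le_of_dvd hp.pos hcardW

end Aux

theorem stmt13 {p : ℕ} (hp : p.Prime) {G : Type*} [Group G] [Finite G]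
    (hG : IsPGroup p G) (hG' : p ^ 2 ≤ Nat.card (commutator G))
    {K : Subgroup G} (hK : IsAGroup p 2 ↥K)
    (huniq : ∀ K' : Subgroup G, IsAGroup p 2 ↥K' → K' = K) :
    ¬ K ≤ frattini G ↔ ∃ M : Subgroup G, M.index = p ∧ IsMinimalNonabelian ↥M := by
  haveI : Fact p.Prime := ⟨hp⟩
  have hp2 := hp.two_le
  constructor
  · intro hKF
    by_contra hno
    push_neg at hno
    obtain ⟨M₀, hM0c, hKM0⟩ : ∃ M₀ : Subgroup G, IsCoatom M₀ ∧ ¬ K ≤ M₀ := by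
      by_contra hc
      push_neg at hc
      exact hKF (le_frattini_iff.mpr fun M hM => hc M hM)
    have habel : ∀ N : Subgroup G, IsCoatom N → ¬ K ≤ N →
        ∀ a ∈ N, ∀ b ∈ N, a * b = b * a := by
      intro N hNc hKN
      have hNnoA2 : ¬ ∃ L : Subgroup ↥N, IsAGroup p 2 ↥L := by
        rintro ⟨L, hL⟩
        have heq : L.map N.subtype = K := huniq _
          (IsAGroup.of_mulEquiv (Subgroup.equivMapOfInjective L N.subtype N.subtype_injective) hL)
        exact hKN (heq ▸ Subgroup.map_subtype_le L)
      rcases noA2_struct hp (Nat.card G) ↥N inferInstance inferInstance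
          (Subgroup.card_le_card_group N) (hG.to_subgroup N) hNnoA2 with hab | hmin
      · intro a ha b hb
        exact Subtype.ext_iff.mp (hab ⟨a, ha⟩ ⟨b, hb⟩)
      · exact absurd hmin (hno N (pg_coatom_index hp hG hNc))
    have honeab : ∀ N : Subgroup G, IsCoatom N → N ≠ M₀ → K ≤ N := by
      intro N hNc hNM0
      by_contra hKN
      have hle := card_commutator_le_of_two_abelian hp hG hNc hM0c hNM0
        (habel N hNc hKN) (habel M₀ hM0c hKM0)
      have h2 : p ^ 2 ≤ p := le_trans hG' hle
      rw [pow_two] at h2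
      exact not_sq_le hp2 h2
    obtain ⟨y, hyK, hyM0⟩ := SetLike.not_le_iff_exists.mp hKM0
    haveI hM0n : M₀.Normal := pg_coatom_normal hp hG hM0c
    obtain ⟨w, hwM0, hwF⟩ : ∃ w ∈ M₀, w ∉ frattini G := by
      by_contra hcw
      push_neg at hcw
      have hFM : frattini G = M₀ := le_antisymm (frattini_le_coatom hM0c) hcw
      have huniqco : ∀ N : Subgroup G, IsCoatom N → N = M₀ := by
        intro N hNc
        have hle : M₀ ≤ N := hFM ▸ frattini_le_coatom hNc
        rcases lt_or_eq_of_le hle with hlt | heq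
        · exact absurd (hM0c.2 _ hlt) hNc.1
        · exact heq.symm
      have hzy : Subgroup.zpowers y = ⊤ := by
        rcases eq_top_or_exists_le_coatom (Subgroup.zpowers y) with h | ⟨N, hNc, hle⟩
        · exact h
        · exact absurd ((huniqco N hNc) ▸ hle (Subgroup.mem_zpowers y)) hyM0
      have hab : ∀ g h : G, g * h = h * g := by
        intro g h
        obtain ⟨m, hm⟩ := Subgroup.mem_zpowers_iff.mp (hzy ▸ Subgroup.mem_top g)
        obtain ⟨n, hn⟩ := Subgroup.mem_zpowers_iff.mp (hzy ▸ Subgroup.mem_top h)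
        rw [← hm, ← hn, ← zpow_add, ← zpow_add, add_comm]
      have hcb : commutator G ≤ ⊥ := by
        rw [_root_.commutator_def, Subgroup.commutator_le]
        intro g _ h _
        rw [Subgroup.mem_bot]
        exact commutatorElement_eq_one_iff_commute.mpr (hab g h)
      have hcard := Subgroup.card_le_of_le hcb
      rw [Subgroup.card_bot] at hcard
      have h2 : p ^ 2 ≤ 1 := le_trans hG' hcard
      rw [pow_two] at h2
      exact not_sq_le_one hp2 h2
    set z := y * w with hz
    have hzM0 : z ∉ M₀ := by
      intro hzm
      apply hyM0
      have hyzw : y = z * w⁻¹ := by rw [hz]; group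
      rw [hyzw]
      exact M₀.mul_mem hzm (M₀.inv_mem hwM0)
    have hyD : y ∉ frattini G ⊔ Subgroup.zpowers z := by
      intro hy
      have hmem : y ∈ (frattini G : Set G) * (Subgroup.zpowers z : Set G) := by
        rw [← Subgroup.normal_mul]
        exact hy
      obtain ⟨f, hf, t, ht, hft⟩ := hmem
      obtain ⟨k, hk⟩ := Subgroup.mem_zpowers_iff.mp ht
      set πM := QuotientGroup.mk' M₀ with hπM
      have hπMf : πM f = 1 := (QuotientGroup.eq_one_iff f).mpr (frattini_le_coatom hM0c hf)
      have hπMw : πM w = 1 := (QuotientGroup.eq_one_iff w).mpr hwM0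
      have hπMz : πM z = πM y := by rw [hz, map_mul, hπMw, mul_one]
      have hyq : πM y = (πM y) ^ k := by
        conv_lhs => rw [← hft, map_mul, hπMf, one_mul, ← hk, map_zpow, hπMz]
      have hyne : πM y ≠ 1 := fun h => hyM0 ((QuotientGroup.eq_one_iff y).mp h)
      have hcard : Nat.card (G ⧸ M₀) = p := by
        rw [← Subgroup.index_eq_card, pg_coatom_index hp hG hM0c]
      have hordy : orderOf (πM y) = p := by
        apply orderOf_eq_prime _ hyne
        rw [← hcard]
        exact pow_card_eq_one'
      have hdvd : (p : ℤ) ∣ k - 1 := by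
        rw [← hordy, orderOf_dvd_iff_zpow_eq_one, zpow_sub, zpow_one, ← hyq, mul_inv_cancel]
      obtain ⟨m, hm⟩ := hdvd
      set πF := QuotientGroup.mk' (frattini G) with hπF
      have hπFf : πF f = 1 := (QuotientGroup.eq_one_iff f).mpr hf
      have hzp : πF z ^ (p : ℤ) = 1 := by
        rw [zpow_natCast, ← map_pow]
        exact (QuotientGroup.eq_one_iff _).mpr (pg_pow_mem_frattini hp hG z)
      have hk1 : k = 1 + (p : ℤ) * m := by omega
      have hyF : πF y = πF z := by
        conv_lhs => rw [← hft, map_mul, hπFf, one_mul, ← hk, map_zpow]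
        rw [hk1, zpow_add, zpow_one, zpow_mul, hzp, one_zpow, mul_one]
      have hwF1 : πF w = 1 := by
        have h3 : πF z = πF y * πF w := by rw [hz, map_mul]
        rw [← hyF] at h3
        have h4 : πF y * 1 = πF y * πF w := by rw [mul_one]; exact h3
        exact (mul_left_cancel h4).symm
      exact hwF ((QuotientGroup.eq_one_iff w).mp hwF1)
    obtain ⟨N₂, hN₂S, hN₂max⟩ := show ∃ N₂ ∈ {H : Subgroup G | frattini G ⊔ Subgroup.zpowers z ≤ H ∧ y ∉ H},
        ∀ H ∈ {H : Subgroup G | frattini G ⊔ Subgroup.zpowers z ≤ H ∧ y ∉ H}, id N₂ ≤ id H → id N₂ = id H from by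
      obtain ⟨b, -, hb⟩ := Set.Finite.exists_le_maximal
        (Set.toFinite {H : Subgroup G | frattini G ⊔ Subgroup.zpowers z ≤ H ∧ y ∉ H})
        (show frattini G ⊔ Subgroup.zpowers z ∈ {H : Subgroup G | frattini G ⊔ Subgroup.zpowers z ≤ H ∧ y ∉ H} from ⟨le_rfl, hyD⟩)
      exact ⟨b, hb.1, fun H hH hle => le_antisymm hle (hb.2 hH hle)⟩
    obtain ⟨hN₂le, hyN₂⟩ := hN₂S
    have hstrict : ∀ H : Subgroup G, N₂ < H → y ∈ H := by
      intro H hlt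
      by_contra hyH
      exact hlt.ne (hN₂max H ⟨hN₂le.trans hlt.le, hyH⟩ hlt.le)
    haveI hN₂n : N₂.Normal := normal_of_commutator_mem fun g k =>
      hN₂le (Subgroup.mem_sup_left (pg_commutator_mem_frattini hp hG g k))
    set π2 := QuotientGroup.mk' N₂ with hπ2
    have hy2 : π2 y ≠ 1 := fun h => hyN₂ ((QuotientGroup.eq_one_iff y).mp h)
    have hexp : ∀ x : G ⧸ N₂, x ^ p = 1 := by
      intro x
      obtain ⟨g, rfl⟩ := QuotientGroup.mk'_surjective N₂ x
      rw [← map_pow]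
      exact (QuotientGroup.eq_one_iff _).mpr
        (hN₂le (Subgroup.mem_sup_left (pg_pow_mem_frattini hp hG g)))
    have hgen : ∀ x : G ⧸ N₂, x ∈ Subgroup.zpowers (π2 y) := by
      intro x
      by_cases hx1 : x = 1
      · rw [hx1]; exact Subgroup.one_mem _
      · have hyx : π2 y ∈ Subgroup.zpowers x := by
          obtain ⟨g, hg⟩ := QuotientGroup.mk'_surjective N₂ x
          have hle : N₂ ≤ Subgroup.comap π2 (Subgroup.zpowers x) := by
            intro nn hnn
            have h1 : π2 nn = 1 := (QuotientGroup.eq_one_iff nn).mpr hnn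
            rw [Subgroup.mem_comap, h1]
            exact Subgroup.one_mem _
          have hgmem : g ∈ Subgroup.comap π2 (Subgroup.zpowers x) := by
            rw [Subgroup.mem_comap, hg]
            exact Subgroup.mem_zpowers x
          have hgN : g ∉ N₂ := by
            intro hmem2
            apply hx1
            rw [← hg]
            exact (QuotientGroup.eq_one_iff g).mpr hmem2
          have hlt : N₂ < Subgroup.comap π2 (Subgroup.zpowers x) := by
            refine lt_of_le_of_ne hle fun he => hgN ?_
            rw [he]
            exact hgmem
          have hymem := hstrict _ hlt
          rwa [Subgroup.mem_comap] at hymem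
        obtain ⟨n, hn⟩ := Subgroup.mem_zpowers_iff.mp hyx
        have hordx : orderOf x = p := orderOf_eq_prime (hexp x) hx1
        have hpn : ¬ ((p : ℤ) ∣ n) := by
          intro hd
          apply hy2
          rw [← hn]
          exact orderOf_dvd_iff_zpow_eq_one.mp (by rw [hordx]; exact hd)
        have hcop : IsCoprime (n : ℤ) (p : ℤ) := by
          rw [Int.isCoprime_iff_gcd_eq_one]
          have hnd : ¬ (p ∣ n.natAbs) := by
            intro hd
            exact hpn (dvd_trans (Int.natCast_dvd_natCast.mpr hd) (Int.natAbs_dvd.mpr dvd_rfl))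
          have hco := (Nat.Prime.coprime_iff_not_dvd hp).mpr hnd
          unfold Int.gcd
          simp only [Int.natAbs_natCast]
          exact Nat.Coprime.symm hco
        obtain ⟨u, v, huv⟩ := hcop
        have hxeq : x = (x ^ (n : ℤ)) ^ u * (x ^ (p : ℤ)) ^ v := by
          rw [← zpow_mul, ← zpow_mul, ← zpow_add, mul_comm ((n : ℤ)) u,
            mul_comm ((p : ℤ)) v, huv, zpow_one]
        have hxp1 : x ^ (p : ℤ) = 1 := by
          rw [zpow_natCast]
          exact hexp x
        rw [hxeq, hxp1, one_zpow, mul_one, hn]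
        exact Subgroup.zpow_mem _ (Subgroup.mem_zpowers _) u
    have hN₂i : N₂.index = p := by
      have htop3 : Subgroup.zpowers (π2 y) = ⊤ := by
        rw [Subgroup.eq_top_iff']
        exact hgen
      have hordy : orderOf (π2 y) = p := orderOf_eq_prime (hexp _) hy2
      rw [Subgroup.index_eq_card, ← Subgroup.card_top (G := G ⧸ N₂), ← htop3,
        Nat.card_zpowers, hordy]
    have hN₂c : IsCoatom N₂ := coatom_of_index_p hp hN₂i
    have hN₂M0 : N₂ ≠ M₀ := by
      intro he
      apply hzM0
      rw [← he]
      exact hN₂le (Subgroup.mem_sup_right (Subgroup.mem_zpowers z))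
    exact hyN₂ (honeab N₂ hN₂c hN₂M0 hyK)
  · rintro ⟨M, hMi, hMmin⟩ hKΦ
    have hMc : IsCoatom M := coatom_of_index_p hp hMi
    have hKM : K ≤ M := hKΦ.trans (frattini_le_coatom hMc)
    obtain ⟨⟨H, hHi, hHnab⟩, -⟩ := hK
    obtain ⟨a, ha, b, hb, hab⟩ : ∃ a ∈ K, ∃ b ∈ K, a * b ≠ b * a := by
      by_contra hc
      push_neg at hc
      exact hHnab fun x hx y hy => Subtype.ext (hc x x.2 y y.2)
    by_cases hMK : M ≤ K
    · have hKMeq : K = M := le_antisymm hKM hMK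
      subst hKMeq
      have hHne : H ≠ ⊤ := by
        intro he
        rw [he, Subgroup.index_top] at hHi
        norm_num at hHi
        omega
      exact hHnab (hMmin.2 H hHne)
    · have hsub : K.subgroupOf M ≠ ⊤ := fun h => hMK (Subgroup.subgroupOf_eq_top.mp h)
      have hcomm := hMmin.2 _ hsub ⟨a, hKM ha⟩ (Subgroup.mem_subgroupOf.mpr ha)
        ⟨b, hKM hb⟩ (Subgroup.mem_subgroupOf.mpr hb)
      exact hab (Subtype.ext_iff.mp hcomm)
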